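/- Let T_α be the Pomeau–Manneville map with parameter α ∈ (0,1), whose left branch is T_α(x) = x + 2^{1+α}x^{1+α} on [0,1/2). Define a′₀ = 1/2 and, for k ≥ 1, let a′_k ∈ (0,1/2) be the unique left-branch preimage, T_α(a′_k) = a′_{k−1}. Then there exist constants c₁, c₂ > 0 (depending on α) such that c₁ k^{−1/α} ≤ a′_k ≤ c₂ k^{−1/α} for all k ≥ 1; in particular a′_k = O(k^{−1/α}). -/

import Mathlib

open Set

noncomputable section

/-- The Pomeau–Manneville map with parameter `α`:
`T_α(x) = x + 2^{1+α} x^{1+α}` on `[0,1/2)` and `T_α(x) = 2x − 1` on `[1/2,1]`. -/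
def pmMap (α : ℝ) (x : ℝ) : ℝ :=
  if x < 1 / 2 then x + 2 ^ (1 + α) * x ^ (1 + α) else 2 * x - 1

/-- **Asymptotics of the parabolic backward orbit of the Pomeau–Manneville map.**
With `a′₀ = 1/2` and `T_α(a′_k) = a′_{k−1}`, `a′_k ∈ (0,1/2)`, one has
`a′_k ≍ k^{−1/α}`. -/
theorem pomeau_manneville_preimage_asymptotics
    (α : ℝ) (hα0 : 0 < α) (hα1 : α < 1)
    (a : ℕ → ℝ) (ha0 : a 0 = 1 / 2)
    (hrec : ∀ k : ℕ, a (k + 1) ∈ Ioo (0 : ℝ) (1 / 2) ∧ pmMap α (a (k + 1)) = a k) :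
    ∃ c₁ > 0, ∃ c₂ > 0, ∀ k : ℕ, 1 ≤ k →
      c₁ * (k : ℝ) ^ (-(1 / α)) ≤ a k ∧ a k ≤ c₂ * (k : ℝ) ^ (-(1 / α)) := by
  have hα0' : (0:ℝ) ≤ α := hα0.le
  set C : ℝ := 2 ^ (1 + α) with hC
  have hCpos : 0 < C := Real.rpow_pos_of_pos (by norm_num) _
  have hapos : ∀ k, 0 < a k := by
    intro k
    cases k with
    | zero => rw [ha0]; norm_num
    | succ n => exact (hrec n).1.1
  have hstep : ∀ k, a k = a (k+1) * (1 + C * a (k+1) ^ α) := by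
    intro k
    have h := (hrec k).2
    rw [pmMap, if_pos (hrec k).1.2] at h
    rw [← h, Real.rpow_add (hapos (k+1)), Real.rpow_one]
    ring
  set b : ℕ → ℝ := fun k => a k ^ (-α) with hb
  have hbpos : ∀ k, 0 < b k := fun k => Real.rpow_pos_of_pos (hapos k) _
  have hkey : ∀ k, b k + α * C / 3 ≤ b (k+1) ∧ b (k+1) ≤ b k + α * C := by
    intro k
    set u := a (k+1) with hu
    have hupos : 0 < u := (hrec k).1.1
    set x := C * u ^ α with hxdef
    have hxpos : 0 < x := mul_pos hCpos (Real.rpow_pos_of_pos hupos _)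
    have hx2 : x ≤ 2 := by
      have h1 : u ^ α ≤ (1/2:ℝ) ^ α :=
        Real.rpow_le_rpow hupos.le (hrec k).1.2.le hα0'
      have h2 : C * (1/2:ℝ) ^ α = 2 := by
        rw [hC, Real.rpow_add (by norm_num : (0:ℝ) < 2), Real.rpow_one,
          one_div, Real.inv_rpow (by norm_num : (0:ℝ) ≤ 2)]
        field_simp
      calc x ≤ C * (1/2:ℝ)^α := mul_le_mul_of_nonneg_left h1 hCpos.le
        _ = 2 := h2
    have hbx : b (k+1) * x = C := by
      show u ^ (-α) * (C * u ^ α) = C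
      rw [mul_comm C, ← mul_assoc, ← Real.rpow_add hupos]
      simp
    have h1px : (0:ℝ) < 1 + x := by linarith
    have hbk : b k = b (k+1) * (1 + x) ^ (-α) := by
      show a k ^ (-α) = u ^ (-α) * (1+x) ^ (-α)
      rw [hstep k, Real.mul_rpow hupos.le h1px.le]
    have hBern : (1 + x) ^ α ≤ 1 + α * x :=
      rpow_one_add_le_one_add_mul_self (by linarith) hα0' hα1.le
    have hlow : 1 - α * x ≤ (1 + x) ^ (-α) := by
      have hp : (0:ℝ) < (1+x)^α := Real.rpow_pos_of_pos h1px _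
      rcases le_or_gt (1 - α * x) 0 with h | h
      · exact h.trans (Real.rpow_pos_of_pos h1px _).le
      · rw [Real.rpow_neg h1px.le, ← one_div, le_div_iff₀ hp]
        nlinarith [mul_le_mul_of_nonneg_left hBern h.le, sq_nonneg (α*x)]
    have hupp : (1 + x) ^ (-α) ≤ 1 - α * x / 3 := by
      have hy : (1+x)⁻¹ = 1 + (-(x/(1+x))) := by field_simp; ring
      have hyle : x / (1+x) ≤ 1 := by
        rw [div_le_one h1px]; linarith
      have hB2 : (1 + (-(x/(1+x)))) ^ α ≤ 1 + α * (-(x/(1+x))) :=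
        rpow_one_add_le_one_add_mul_self (by linarith) hα0' hα1.le
      have heq : (1 + x) ^ (-α) = ((1+x)⁻¹) ^ α := by
        rw [Real.rpow_neg h1px.le, ← Real.inv_rpow h1px.le]
      have h3 : x / 3 ≤ x / (1+x) := by
        rw [div_le_div_iff₀ (by norm_num) h1px]
        nlinarith
      calc (1 + x) ^ (-α) = (1 + (-(x/(1+x)))) ^ α := by rw [heq, hy]
        _ ≤ 1 + α * (-(x/(1+x))) := hB2
        _ = 1 - α * (x/(1+x)) := by ring
        _ ≤ 1 - α * (x/3) := by nlinarith
        _ = 1 - α * x / 3 := by ring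
    constructor
    · have hm : b (k+1) * (1 + x) ^ (-α) ≤ b (k+1) * (1 - α * x / 3) :=
        mul_le_mul_of_nonneg_left hupp (hbpos (k+1)).le
      nlinarith [hbk, hbx, hm]
    · have hm : b (k+1) * (1 - α * x) ≤ b (k+1) * (1 + x) ^ (-α) :=
        mul_le_mul_of_nonneg_left hlow (hbpos (k+1)).le
      nlinarith [hbk, hbx, hm]
  have hb0 : b 0 = 2 ^ α := by
    show a 0 ^ (-α) = (2:ℝ) ^ α
    rw [ha0, one_div, Real.inv_rpow (by norm_num : (0:ℝ) ≤ 2),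
      Real.rpow_neg (by norm_num : (0:ℝ) ≤ 2), inv_inv]
  have h2a : (0:ℝ) < 2 ^ α := Real.rpow_pos_of_pos (by norm_num) _
  have hbound : ∀ k : ℕ, 2^α + α*C/3*k ≤ b k ∧ b k ≤ 2^α + α*C*k := by
    intro k
    induction k with
    | zero => simp [hb0]
    | succ n ih =>
      obtain ⟨h1, h2⟩ := ih
      obtain ⟨g1, g2⟩ := hkey n
      constructor
      · push_cast; linarith
      · push_cast; linarith
  have hz : -(1/α) ≤ 0 := neg_nonpos.mpr (by positivity)
  refine ⟨(2^α + α*C)^(-(1/α)), Real.rpow_pos_of_pos (by positivity) _,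
    (α*C/3)^(-(1/α)), Real.rpow_pos_of_pos (by positivity) _, ?_⟩
  intro k hk
  have hk1 : (1:ℝ) ≤ (k:ℝ) := by exact_mod_cast hk
  have hkpos : (0:ℝ) < k := by linarith
  have hak : a k = (b k) ^ (-(1/α)) := by
    show a k = (a k ^ (-α)) ^ (-(1/α))
    rw [← Real.rpow_mul (hapos k).le]
    have : (-α) * (-(1/α)) = 1 := by field_simp
    rw [this, Real.rpow_one]
  constructor
  · have hBk : b k ≤ (2^α + α*C) * k := by
      have := (hbound k).2
      nlinarith [hCpos, hα0, h2a]
    have h := Real.rpow_le_rpow_of_nonpos (hbpos k) hBk hz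
    rw [Real.mul_rpow (by positivity) hkpos.le] at h
    rw [hak]; exact h
  · have hDk : (α*C/3) * k ≤ b k := by
      have := (hbound k).1
      nlinarith [h2a]
    have h := Real.rpow_le_rpow_of_nonpos (by positivity) hDk hz
    rw [Real.mul_rpow (by positivity) hkpos.le] at h
    rw [hak]; exact h
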